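/- In the category of finite pointed sets with cofibrations the injective pointed maps: given an injective pointed map f : A ↣ X with cokernel (quotient) q : X ↠ X/A, and an injective pointed map g : B ↣ X/A, the set C = q^{-1}(g(B)) contains A, the inclusions A ↣ C ↣ X are injective, the square expressing C/A ≅ B is a pushout, and the square C ↣ X, C ↠ B, B ↣ X/A, X ↠ X/A is both a pushout and a pullback. -/

import Mathlib

/-!
STATEMENT 16: In the category of finite pointed sets with cofibrations the injective
pointed maps: given an injective pointed map (a pointed subset) `A ⊆ X` with cokernel
(quotient) `q : X ↠ X/A`, and an injective pointed map (a pointed subset) `B ⊆ X/A`,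
the set `C = q⁻¹(B)` contains `A`, the inclusions `A ↣ C ↣ X` are injective, the square
expressing `C/A ≅ B` (i.e. `A ↣ C`, `A → 0`, `C ↠ B`, `0 → B`) is a pushout, and the
square `C ↣ X`, `C ↠ B`, `X ↠ X/A`, `B ↣ X/A` is both a pushout and a pullback — all in
the category `Pointed` of pointed sets.
-/

open CategoryTheory

universe u

/-- The relation on `X` whose quotient is `X/A`: identify all the points of `A`. -/
def collapseRel {X : Type u} (A : Set X) (a b : X) : Prop :=
  a = b ∨ (a ∈ A ∧ b ∈ A)

/-- The quotient `X/A` of a set by a subset. -/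
def Collapse {X : Type u} (A : Set X) : Type u :=
  Quot (collapseRel A)

/-- The quotient map `q : X → X/A`. -/
def collapse {X : Type u} (A : Set X) (x : X) : Collapse A :=
  Quot.mk _ x

theorem pointed_finite_sets_satisfy_condition {X : Type u} [Fintype X] (x₀ : X)
    (A : Set X) (hA : x₀ ∈ A) (B : Set (Collapse A)) (hB : collapse A x₀ ∈ B) :
    -- `C := q⁻¹(B)` contains `A` …
    ∃ hAC : A ⊆ collapse A ⁻¹' B,
      -- the pointed objects and maps in question:
      let C : Set X := collapse A ⁻¹' B
      let PX : Pointed.{u} := ⟨X, x₀⟩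
      let PA : Pointed.{u} := ⟨A, ⟨x₀, hA⟩⟩
      let PC : Pointed.{u} := ⟨C, ⟨x₀, hAC hA⟩⟩
      let PB : Pointed.{u} := ⟨B, ⟨collapse A x₀, hB⟩⟩
      let PQ : Pointed.{u} := ⟨Collapse A, collapse A x₀⟩
      let PZ : Pointed.{u} := ⟨PUnit, PUnit.unit⟩
      let incAC : PA ⟶ PC := ⟨fun a => ⟨a.1, hAC a.2⟩, rfl⟩
      let incCX : PC ⟶ PX := ⟨Subtype.val, rfl⟩
      let qC : PC ⟶ PB := ⟨fun c => ⟨collapse A c.1, c.2⟩, rfl⟩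
      let qX : PX ⟶ PQ := ⟨collapse A, rfl⟩
      let incB : PB ⟶ PQ := ⟨Subtype.val, rfl⟩
      let toZ : PA ⟶ PZ := ⟨fun _ => PUnit.unit, rfl⟩
      let fromZ : PZ ⟶ PB := ⟨fun _ => PB.point, rfl⟩
      -- …the inclusions `A ↣ C ↣ X` are injective…
      Function.Injective incAC.toFun ∧ Function.Injective incCX.toFun ∧
      -- …the square expressing `C/A ≅ B` is a pushout…
      IsPushout incAC toZ qC fromZ ∧
      -- …and the right-hand square is both a pushout and a pullback.
      IsPushout incCX qC qX incB ∧ IsPullback incCX qC qX incB := by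
  have key : ∀ a ∈ A, collapse A a = collapse A x₀ :=
    fun a ha => Quot.sound (Or.inr ⟨ha, hA⟩)
  have hAC : A ⊆ collapse A ⁻¹' B := fun a ha => by
    show collapse A a ∈ B
    rw [key a ha]; exact hB
  refine ⟨hAC, ?_⟩
  intro C PX PA PC PB PQ PZ incAC incCX qC qX incB toZ fromZ
  classical
  refine ⟨?_, ?_, ?_, ?_, ?_⟩
  · -- injectivity of A ↪ C
    intro a b h
    rw [Subtype.ext_iff] at h ⊢
    exact h
  · -- injectivity of C ↪ X
    exact fun a b h => Subtype.ext h
  · -- first pushout square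
    have eq1 : incAC ≫ qC = toZ ≫ fromZ := by
      apply Pointed.Hom.ext; funext a
      exact Subtype.ext (key a.1 a.2)
    exact IsPushout.of_isColimit (Limits.PushoutCocone.IsColimit.mk eq1
      (fun s =>
        ⟨fun b => Quot.lift
            (fun x => if h : collapse A x ∈ B then s.inl.toFun ⟨x, h⟩ else s.pt.point)
            (by
              rintro x y (rfl | ⟨hx, hy⟩)
              · rfl
              · skip
                have hx' : collapse A x ∈ B := by rw [key x hx]; exact hB
                have hy' : collapse A y ∈ B := by rw [key y hy]; exact hB
                rw [dif_pos hx', dif_pos hy']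
                have c1 := congrFun (congrArg Pointed.Hom.toFun s.condition) ⟨x, hx⟩
                have c2 := congrFun (congrArg Pointed.Hom.toFun s.condition) ⟨y, hy⟩
                exact c1.trans c2.symm)
            b.1,
         by
          show (if h : collapse A x₀ ∈ B then s.inl.toFun ⟨x₀, h⟩ else s.pt.point) = s.pt.point
          rw [dif_pos hB]
          exact s.inl.map_point⟩)
      (fun s => by
        apply Pointed.Hom.ext; funext c
        show (if h : collapse A c.1 ∈ B then s.inl.toFun ⟨c.1, h⟩ else s.pt.point)
            = s.inl.toFun c
        rw [dif_pos (show collapse A c.1 ∈ B from c.2)])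
      (fun s => by
        apply Pointed.Hom.ext; funext p
        show (if h : collapse A x₀ ∈ B then s.inl.toFun ⟨x₀, h⟩ else s.pt.point)
            = s.inr.toFun p
        rw [dif_pos hB]
        have c1 := congrFun (congrArg Pointed.Hom.toFun s.condition) PA.point
        exact c1.trans (congrArg s.inr.toFun rfl))
      (fun s m h1 h2 => by
        apply Pointed.Hom.ext; funext b
        obtain ⟨x, hx⟩ := Quot.exists_rep b.1
        have hxB : collapse A x ∈ B := by show Quot.mk _ x ∈ B; rw [hx]; exact b.2
        have hb : qC.toFun ⟨x, hxB⟩ = b := Subtype.ext hx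
        calc m.toFun b = m.toFun (qC.toFun ⟨x, hxB⟩) := by rw [hb]
          _ = s.inl.toFun ⟨x, hxB⟩ := congrFun (congrArg Pointed.Hom.toFun h1) ⟨x, hxB⟩
          _ = _ := by
              rw [← hb]
              show s.inl.toFun ⟨x, hxB⟩
                = (if h : collapse A x ∈ B then s.inl.toFun ⟨x, h⟩ else s.pt.point)
              rw [dif_pos hxB]))
  · -- second square is a pushout
    have eq2 : incCX ≫ qX = qC ≫ incB := by
      apply Pointed.Hom.ext; funext c; rfl
    exact IsPushout.of_isColimit (Limits.PushoutCocone.IsColimit.mk eq2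
      (fun s =>
        ⟨Quot.lift
            (fun x => if h : collapse A x ∈ B then s.inr.toFun ⟨collapse A x, h⟩
              else s.inl.toFun x)
            (by
              rintro x y (rfl | ⟨hx, hy⟩)
              · rfl
              · skip
                have e : collapse A x = collapse A y := (key x hx).trans (key y hy).symm
                have hx' : collapse A x ∈ B := by rw [key x hx]; exact hB
                have hy' : collapse A y ∈ B := by rw [key y hy]; exact hB
                rw [dif_pos hx', dif_pos hy']
                exact congrArg s.inr.toFun (Subtype.ext e)),
         by
          show (if h : collapse A x₀ ∈ B then s.inr.toFun ⟨collapse A x₀, h⟩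
              else s.inl.toFun x₀) = s.pt.point
          rw [dif_pos hB]
          exact s.inr.map_point⟩)
      (fun s => by
        apply Pointed.Hom.ext; funext x
        show (if h : collapse A x ∈ B then s.inr.toFun ⟨collapse A x, h⟩
            else s.inl.toFun x) = s.inl.toFun x
        by_cases h : collapse A x ∈ B
        · rw [dif_pos h]
          exact (congrFun (congrArg Pointed.Hom.toFun s.condition) ⟨x, h⟩).symm
        · rw [dif_neg h])
      (fun s => by
        apply Pointed.Hom.ext; funext b
        obtain ⟨x, hx⟩ := Quot.exists_rep b.1
        have hxB : collapse A x ∈ B := by show Quot.mk _ x ∈ B; rw [hx]; exact b.2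
        show Quot.lift _ _ b.1 = s.inr.toFun b
        rw [← hx]
        show (if h : collapse A x ∈ B then s.inr.toFun ⟨collapse A x, h⟩
            else s.inl.toFun x) = s.inr.toFun b
        rw [dif_pos hxB]
        exact congrArg s.inr.toFun (Subtype.ext hx))
      (fun s m h1 h2 => by
        apply Pointed.Hom.ext; funext y
        obtain ⟨x, hx⟩ := Quot.exists_rep y
        have hx' : collapse A x = y := hx
        rw [← hx']
        have hm : m.toFun (collapse A x) = s.inl.toFun x :=
          congrFun (congrArg Pointed.Hom.toFun h1) x
        rw [hm]
        show s.inl.toFun x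
          = (if h : collapse A x ∈ B then s.inr.toFun ⟨collapse A x, h⟩ else s.inl.toFun x)
        by_cases h : collapse A x ∈ B
        · rw [dif_pos h]
          exact congrFun (congrArg Pointed.Hom.toFun s.condition) ⟨x, h⟩
        · rw [dif_neg h]))
  · -- second square is a pullback
    have eq2 : incCX ≫ qX = qC ≫ incB := by
      apply Pointed.Hom.ext; funext c; rfl
    exact IsPullback.of_isLimit (Limits.PullbackCone.IsLimit.mk eq2
      (fun s =>
        ⟨fun w => ⟨s.fst.toFun w, by
            have hc := congrFun (congrArg Pointed.Hom.toFun s.condition) w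
            show collapse A (s.fst.toFun w) ∈ B
            rw [show collapse A (s.fst.toFun w) = (s.snd.toFun w).1 from hc]
            exact (s.snd.toFun w).2⟩,
         Subtype.ext s.fst.map_point⟩)
      (fun s => by apply Pointed.Hom.ext; funext w; rfl)
      (fun s => by
        apply Pointed.Hom.ext; funext w
        exact Subtype.ext (congrFun (congrArg Pointed.Hom.toFun s.condition) w))
      (fun s m h1 h2 => by
        apply Pointed.Hom.ext; funext w
        exact Subtype.ext (congrFun (congrArg Pointed.Hom.toFun h1) w)))
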